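/- Well-posedness of the boundary map: in the setting of the abstract Kreĭn formula, if R_{z₁}^B u₁ = R_{z₂}^B u₂ then (π₁*⊕1) Λ_{z₁}^B G_{z̄₁}* u₁ = (π₁*⊕1) Λ_{z₂}^B G_{z̄₂}* u₂, so that ρ_B : dom(A_B) → 𝔥₁*⊕𝔥₂* is well defined. -/

import Mathlib

open ComplexConjugate
noncomputable section

/-- `Rz` is the resolvent `(-A + z)⁻¹` of the (unbounded) operator `A` at `z`. -/
def IsResolventAt {H : Type*} [NormedAddCommGroup H] [InnerProductSpace ℂ H] [CompleteSpace H]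
    (A : H →ₗ.[ℂ] H) (z : ℂ) (Rz : H →L[ℂ] H) : Prop :=
  (∀ u : H, ∃ hu : Rz u ∈ A.domain, z • Rz u - A ⟨Rz u, hu⟩ = u) ∧
    ∀ x : A.domain, Rz (z • (x : H) - A x) = x

/-- The block-diagonal operator `P ⊕ Q` between Hilbertian direct sums. -/
def blockDiag {h1 h2 h1' h2' : Type*}
    [NormedAddCommGroup h1] [InnerProductSpace ℂ h1]
    [NormedAddCommGroup h2] [InnerProductSpace ℂ h2]
    [NormedAddCommGroup h1'] [InnerProductSpace ℂ h1']
    [NormedAddCommGroup h2'] [InnerProductSpace ℂ h2']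
    (P : h1 →L[ℂ] h1') (Q : h2 →L[ℂ] h2') :
    WithLp 2 (h1 × h2) →L[ℂ] WithLp 2 (h1' × h2') :=
  ((WithLp.prodContinuousLinearEquiv 2 ℂ h1' h2').symm.toContinuousLinearMap.comp
      (P.prodMap Q)).comp
    (WithLp.prodContinuousLinearEquiv 2 ℂ h1 h2).toContinuousLinearMap

/-- The pair `(φ₁, φ₂)` as an element of the Hilbertian direct sum. -/
def pairL2 {h1 h2 : Type*}
    [NormedAddCommGroup h1] [InnerProductSpace ℂ h1]
    [NormedAddCommGroup h2] [InnerProductSpace ℂ h2] (φ₁ : h1) (φ₂ : h2) :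
    WithLp 2 (h1 × h2) :=
  (WithLp.prodContinuousLinearEquiv 2 ℂ h1 h2).symm (φ₁, φ₂)

section Helpers

variable {H h1 h2 : Type*} [NormedAddCommGroup H] [InnerProductSpace ℂ H] [CompleteSpace H]
  [NormedAddCommGroup h1] [InnerProductSpace ℂ h1]
  [NormedAddCommGroup h2] [InnerProductSpace ℂ h2]

local notation "⟪" x ", " y "⟫" => @inner ℂ _ _ x y

lemma pairL2_sub (a c : h1) (b d : h2) :
    pairL2 a b - pairL2 c d = pairL2 (a - c) (b - d) := rfl

lemma pairL2_smul (c : ℂ) (a : h1) (b : h2) :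
    c • pairL2 a b = pairL2 (c • a) (c • b) := rfl

lemma pairL2_zero : pairL2 (0 : h1) (0 : h2) = 0 := by
  simp [pairL2]

lemma pairL2_fst (a : h1) (b : h2) : (pairL2 a b).fst = a := rfl

lemma pairL2_snd (a : h1) (b : h2) : (pairL2 a b).snd = b := rfl

lemma pairL2_eta (x : WithLp 2 (h1 × h2)) : pairL2 x.fst x.snd = x := rfl

lemma blockDiag_pairL2 {h1' h2' : Type*}
    [NormedAddCommGroup h1'] [InnerProductSpace ℂ h1']
    [NormedAddCommGroup h2'] [InnerProductSpace ℂ h2']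
    (P : h1 →L[ℂ] h1') (Q : h2 →L[ℂ] h2') (a : h1) (b : h2) :
    blockDiag P Q (pairL2 a b) = pairL2 (P a) (Q b) := rfl

lemma pairL2_inj {a c : h1} {b d : h2} (h : pairL2 a b = pairL2 c d) : a = c ∧ b = d := by
  constructor
  · have := congrArg (·.fst) h; exact this
  · have := congrArg (·.snd) h; exact this

lemma inner_pairL2 (x : WithLp 2 (h1 × h2)) (a : h1) (b : h2) :
    ⟪x, pairL2 a b⟫ = ⟪x.fst, a⟫ + ⟪x.snd, b⟫ := rfl

variable {A : H →ₗ.[ℂ] H} {z w : ℂ} {Rz Rw : H →L[ℂ] H}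

lemma resMem (h : IsResolventAt A z Rz) (u : H) : Rz u ∈ A.domain := (h.1 u).choose

lemma resEq (h : IsResolventAt A z Rz) (u : H) (hu : Rz u ∈ A.domain) :
    z • Rz u - A ⟨Rz u, hu⟩ = u := (h.1 u).choose_spec

lemma resolventId (hz : IsResolventAt A z Rz) (hw : IsResolventAt A w Rw) (u : H) :
    Rz u - Rw u = (w - z) • Rz (Rw u) := by
  obtain ⟨hx, hxu⟩ := hw.1 u
  set x' : A.domain := ⟨Rw u, hx⟩ with hx'
  have h1 : u = (z • (x' : H) - A x') + (w - z) • (x' : H) := by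
    rw [← hxu]; simp [hx']; module
  have h2 : Rz u = x' + (w - z) • Rz (x' : H) := by
    conv_lhs => rw [h1]
    rw [map_add, map_smul, hz.2 x']
  rw [h2]; simp [hx']

lemma resAdjoint (hA : A.IsFormalAdjoint A) (hz : IsResolventAt A z Rz)
    (hzc : IsResolventAt A (conj z) Rw) : Rw.adjoint = Rz := by
  symm
  rw [ContinuousLinearMap.eq_adjoint_iff]
  intro x y
  obtain ⟨ha, hax⟩ := hz.1 x
  obtain ⟨hb, hby⟩ := hzc.1 y
  set a' : A.domain := ⟨Rz x, ha⟩
  set b' : A.domain := ⟨Rw y, hb⟩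
  have h1 : ⟪Rz x, y⟫ = conj z * ⟪(a' : H), (b' : H)⟫ - ⟪(a' : H), A b'⟫ := by
    conv_lhs => rw [← hby]
    rw [inner_sub_right, inner_smul_right]
  have h2 : ⟪x, Rw y⟫ = conj z * ⟪(a' : H), (b' : H)⟫ - ⟪A a', (b' : H)⟫ := by
    conv_lhs => rw [← hax]
    rw [inner_sub_left, inner_smul_left]
  rw [h1, h2, hA a' b']

end Helpers
set_option maxHeartbeats 2000000 in
theorem statement_7
    {H h1 h2 h22 : Type*}
    [NormedAddCommGroup H] [InnerProductSpace ℂ H] [CompleteSpace H]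
    [NormedAddCommGroup h1] [InnerProductSpace ℂ h1] [CompleteSpace h1]
    [NormedAddCommGroup h2] [InnerProductSpace ℂ h2] [CompleteSpace h2]
    [NormedAddCommGroup h22] [InnerProductSpace ℂ h22] [CompleteSpace h22]
    (A : H →ₗ.[ℂ] H) (hA : IsSelfAdjoint A)
    (R : ℂ → H →L[ℂ] H) (ρA : Set ℂ)
    (hρA : ρA = {z : ℂ | ∃ Q : H →L[ℂ] H, IsResolventAt A z Q})
    (hρAres : ∀ z ∈ ρA, IsResolventAt A z (R z))
    (hρAconj : ∀ z ∈ ρA, conj z ∈ ρA)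
    (τ₁ : A.domain →ₗ[ℂ] h1) (τ₂ : A.domain →ₗ[ℂ] h2)
    (hτbdd : ∃ C : ℝ, ∀ x : A.domain, ‖τ₁ x‖ + ‖τ₂ x‖ ≤ C * (‖(x : H)‖ + ‖A x‖))
    (hker₂ : Dense {u : H | ∃ hu : u ∈ A.domain, τ₂ ⟨u, hu⟩ = 0})
    (hran₂ : DenseRange τ₂)
    (T : ℂ → H →L[ℂ] WithLp 2 (h1 × h2))
    (hT : ∀ z ∈ ρA, ∀ (u : H) (hu : R z u ∈ A.domain),
      T z u = pairL2 (τ₁ ⟨R z u, hu⟩) (τ₂ ⟨R z u, hu⟩))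
    (G : ℂ → WithLp 2 (h1 × h2) →L[ℂ] H)
    (hG : ∀ z ∈ ρA, G z = (T (conj z)).adjoint)
    (N : ℂ → WithLp 2 (h1 × h2) →L[ℂ] WithLp 2 (h1 × h2))
    (hNext : ∀ z ∈ ρA, ∀ (φ : WithLp 2 (h1 × h2)) (hφ : G z φ ∈ A.domain),
      N z φ = pairL2 (τ₁ ⟨G z φ, hφ⟩) (τ₂ ⟨G z φ, hφ⟩))
    (hNadj : ∀ z ∈ ρA, (N z).adjoint = N (conj z))
    (hNdiff : ∀ z ∈ ρA, ∀ w ∈ ρA,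
      N w - N z = (z - w) • (((G (conj w)).adjoint).comp (G z)))
    (B₀ : h2 →L[ℂ] h22) (B₁ : h1 →L[ℂ] h1) (B₂ : h2 →L[ℂ] h22)
    (hB₁ : IsSelfAdjoint B₁) (hB₀₂ : B₀.comp B₂.adjoint = B₂.comp B₀.adjoint)
    (Minv : ℂ → WithLp 2 (h1 × h22) →L[ℂ] WithLp 2 (h1 × h2))
    (ZB : Set ℂ)
    (hZB : ZB = {z ∈ ρA | ∀ w ∈ ({z, conj z} : Set ℂ),
      (Minv w).comp (blockDiag (1 : h1 →L[ℂ] h1) B₀ - (blockDiag B₁ B₂).comp (N w)) = 1 ∧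
      (blockDiag (1 : h1 →L[ℂ] h1) B₀ - (blockDiag B₁ B₂).comp (N w)).comp (Minv w) = 1})
    (hZBne : ZB.Nonempty)
    (AB : H →ₗ.[ℂ] H) (hAB : IsSelfAdjoint AB)
    (hABres : ∀ z ∈ ZB, IsResolventAt AB z
      (R z + ((G z).comp ((Minv z).comp (blockDiag B₁ B₂))).comp ((G (conj z)).adjoint)))
    (P1 : h1 →L[ℂ] h1) (hP1sa : IsSelfAdjoint P1) (hP1idem : P1.comp P1 = P1)
    (hP1mem : ∀ y : h1, P1 y ∈ closure (Set.range fun x : A.domain => τ₁ x))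
    (hP1fix : ∀ y ∈ closure (Set.range fun x : A.domain => τ₁ x), P1 y = y)
    :
    ∀ z₁ ∈ ZB, ∀ z₂ ∈ ZB, ∀ u₁ u₂ : H,
      (R z₁ + ((G z₁).comp ((Minv z₁).comp (blockDiag B₁ B₂))).comp
          ((G (conj z₁)).adjoint)) u₁
        = (R z₂ + ((G z₂).comp ((Minv z₂).comp (blockDiag B₁ B₂))).comp
          ((G (conj z₂)).adjoint)) u₂ →
      blockDiag P1 (1 : h2 →L[ℂ] h2)
          ((Minv z₁) ((blockDiag B₁ B₂) ((G (conj z₁)).adjoint u₁)))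
        = blockDiag P1 (1 : h2 →L[ℂ] h2)
          ((Minv z₂) ((blockDiag B₁ B₂) ((G (conj z₂)).adjoint u₂))) := by
  intro z₁ hz₁ z₂ hz₂ u₁ u₂ heq
  rw [hZB] at hz₁ hz₂
  obtain ⟨hρ₁, hM₁⟩ := hz₁
  obtain ⟨hρ₂, hM₂⟩ := hz₂
  have hρ₁c := hρAconj z₁ hρ₁
  have hρ₂c := hρAconj z₂ hρ₂
  have hres₁ := hρAres z₁ hρ₁
  have hres₂ := hρAres z₂ hρ₂
  have hres₂c := hρAres _ hρ₂c
  have hsym : A.IsFormalAdjoint A := by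
    have h := LinearPMap.adjoint_isFormalAdjoint hA.dense_domain
    rwa [LinearPMap.isSelfAdjoint_def.mp hA] at h
  have hGT : ∀ z ∈ ρA, (G (conj z)).adjoint = T z := by
    intro z hz
    rw [hG (conj z) (hρAconj z hz), ContinuousLinearMap.adjoint_adjoint, Complex.conj_conj]
  have hTdiff : ∀ z ∈ ρA, ∀ w ∈ ρA, T z - T w = (w - z) • (T z).comp (R w) := by
    intro z hz w hw
    ext u
    have hz' := hρAres z hz
    have hw' := hρAres w hw
    have hzu := resMem hz' u
    have hwu := resMem hw' u
    have hzwu := resMem hz' (R w u)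
    rw [ContinuousLinearMap.sub_apply, ContinuousLinearMap.smul_apply,
      ContinuousLinearMap.comp_apply, hT z hz u hzu, hT w hw u hwu, hT z hz (R w u) hzwu,
      pairL2_sub, pairL2_smul]
    have key : (⟨R z u, hzu⟩ - ⟨R w u, hwu⟩ : A.domain) = (w - z) • ⟨R z (R w u), hzwu⟩ := by
      apply Subtype.ext; simpa using resolventId hz' hw' u
    rw [← map_sub, ← map_sub, ← map_smul, ← map_smul, key]
  have hGdiff : ∀ z ∈ ρA, ∀ w ∈ ρA, G z - G w = (w - z) • (R w).comp (G z) := by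
    intro z hz w hw
    have h1 : G z - G w = ((conj w - conj z) • (T (conj z)).comp (R (conj w))).adjoint := by
      rw [hG z hz, hG w hw, ← map_sub, hTdiff (conj z) (hρAconj z hz) (conj w) (hρAconj w hw)]
    rw [h1, map_smulₛₗ, ContinuousLinearMap.adjoint_comp, ← hG z hz,
      resAdjoint hsym (hρAres w hw) (hρAres (conj w) (hρAconj w hw))]
    congr 1
    simp
  rw [hGT z₁ hρ₁, hGT z₂ hρ₂] at heq ⊢
  set Bm := blockDiag B₁ B₂ with hBm
  set D := blockDiag (1 : h1 →L[ℂ] h1) B₀ with hD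
  set φ₁ := Minv z₁ (Bm (T z₁ u₁)) with hφ₁
  set φ₂ := Minv z₂ (Bm (T z₂ u₂)) with hφ₂
  suffices hφeq : φ₁ = φ₂ by rw [hφeq]
  have heq' : R z₁ u₁ + G z₁ φ₁ = R z₂ u₂ + G z₂ φ₂ := by
    simpa [ContinuousLinearMap.add_apply, ContinuousLinearMap.comp_apply] using heq
  have hbc₁ : D φ₁ = Bm (N z₁ φ₁) + Bm (T z₁ u₁) := by
    have h := (hM₁ z₁ (Set.mem_insert _ _)).2
    have h' := congrArg (fun f => f (Bm (T z₁ u₁))) h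
    simp only [ContinuousLinearMap.comp_apply, ContinuousLinearMap.sub_apply,
      ContinuousLinearMap.one_apply] at h'
    rw [sub_eq_iff_eq_add] at h'
    rw [← hφ₁] at h'
    rw [h']
    abel
  have hbc₂ : D φ₂ = Bm (N z₂ φ₂) + Bm (T z₂ u₂) := by
    have h := (hM₂ z₂ (Set.mem_insert _ _)).2
    have h' := congrArg (fun f => f (Bm (T z₂ u₂))) h
    simp only [ContinuousLinearMap.comp_apply, ContinuousLinearMap.sub_apply,
      ContinuousLinearMap.one_apply] at h'
    rw [sub_eq_iff_eq_add] at h'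
    rw [← hφ₂] at h'
    rw [h']
    abel
  set η := φ₁ - φ₂ with hη
  have hGz2η : G z₂ η = (R z₂ u₂ - R z₁ u₁) - (z₂ - z₁) • R z₂ (G z₁ φ₁) := by
    have hdφ : G z₁ φ₁ - G z₂ φ₁ = (z₂ - z₁) • R z₂ (G z₁ φ₁) := by
      have h' := congrArg (fun f => f φ₁) (hGdiff z₁ hρ₁ z₂ hρ₂)
      simpa using h'
    have h2 : G z₂ φ₂ = R z₁ u₁ + G z₁ φ₁ - R z₂ u₂ := by rw [heq']; abel
    have h3 : G z₂ φ₁ = G z₁ φ₁ - (z₂ - z₁) • R z₂ (G z₁ φ₁) := by rw [← hdφ]; abel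
    rw [hη, map_sub, h2, h3]
    abel
  have hwmem : G z₂ η ∈ A.domain := by
    rw [hGz2η]
    exact sub_mem (sub_mem (resMem hres₂ u₂) (resMem hres₁ u₁))
      (Submodule.smul_mem _ _ (resMem hres₂ (G z₁ φ₁)))
  have hmem1 : R z₁ u₁ ∈ A.domain := resMem hres₁ u₁
  have hmem2 : R z₂ u₂ ∈ A.domain := resMem hres₂ u₂
  have hmem3 : R z₂ (G z₁ φ₁) ∈ A.domain := resMem hres₂ (G z₁ φ₁)
  have hw' : (⟨G z₂ η, hwmem⟩ : A.domain)
      = (⟨R z₂ u₂, hmem2⟩ - ⟨R z₁ u₁, hmem1⟩) - (z₂ - z₁) • ⟨R z₂ (G z₁ φ₁), hmem3⟩ := by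
    apply Subtype.ext; simpa using hGz2η
  have hNη2 : N z₂ η = (T z₂ u₂ - T z₁ u₁) - (z₂ - z₁) • T z₂ (G z₁ φ₁) := by
    rw [hNext z₂ hρ₂ η hwmem, hw', hT z₂ hρ₂ u₂ hmem2, hT z₁ hρ₁ u₁ hmem1,
      hT z₂ hρ₂ (G z₁ φ₁) hmem3, pairL2_smul, pairL2_sub, pairL2_sub]
    simp only [map_sub, map_smul]
  have hNd : N z₁ φ₁ - N z₂ φ₁ = (z₂ - z₁) • T z₁ (G z₂ φ₁) := by
    have h' := congrArg (fun f => f φ₁) (hNdiff z₂ hρ₂ z₁ hρ₁)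
    simpa [hGT z₁ hρ₁] using h'
  have hcross : (z₂ - z₁) • R z₂ (G z₁ φ₁) = (z₂ - z₁) • R z₁ (G z₂ φ₁) := by
    have h1' := congrArg (fun f => f φ₁) (hGdiff z₁ hρ₁ z₂ hρ₂)
    have h2' := congrArg (fun f => f φ₁) (hGdiff z₂ hρ₂ z₁ hρ₁)
    simp only [ContinuousLinearMap.sub_apply, ContinuousLinearMap.smul_apply,
      ContinuousLinearMap.comp_apply] at h1' h2'
    have hneg : (z₂ - z₁) • R z₁ (G z₂ φ₁) = -((z₁ - z₂) • R z₁ (G z₂ φ₁)) := by module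
    rw [hneg, ← h2', ← h1']
    abel
  have hm3' : R z₁ (G z₂ φ₁) ∈ A.domain := resMem hres₁ (G z₂ φ₁)
  have hTcross : (z₂ - z₁) • T z₂ (G z₁ φ₁) = (z₂ - z₁) • T z₁ (G z₂ φ₁) := by
    have hsub : (z₂ - z₁) • (⟨R z₂ (G z₁ φ₁), hmem3⟩ : A.domain)
        = (z₂ - z₁) • (⟨R z₁ (G z₂ φ₁), hm3'⟩ : A.domain) := by
      apply Subtype.ext; simpa using hcross
    rw [hT z₂ hρ₂ (G z₁ φ₁) hmem3, hT z₁ hρ₁ (G z₂ φ₁) hm3', pairL2_smul, pairL2_smul]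
    simp only [← map_smul]
    rw [hsub]
  have hDη : D η = 0 := by
    have hkey : N z₁ φ₁ + T z₁ u₁ - (N z₂ φ₂ + T z₂ u₂) = 0 := by
      have hNsplit : N z₂ φ₁ = N z₂ φ₂ + N z₂ η := by rw [hη, map_sub]; abel
      have h5 := sub_eq_iff_eq_add.mp hNd
      rw [h5, hNsplit, hNη2, ← hTcross]
      abel
    calc D η = D φ₁ - D φ₂ := by rw [hη, map_sub]
      _ = Bm (N z₁ φ₁) + Bm (T z₁ u₁) - (Bm (N z₂ φ₂) + Bm (T z₂ u₂)) := by rw [hbc₁, hbc₂]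
      _ = Bm (N z₁ φ₁ + T z₁ u₁ - (N z₂ φ₂ + T z₂ u₂)) := by simp [map_sub, map_add]
      _ = 0 := by rw [hkey, map_zero]
  have hcomp : η.fst = 0 ∧ B₀ η.snd = 0 := by
    apply pairL2_inj
    have hblock : D η = pairL2 ((1 : h1 →L[ℂ] h1) η.fst) (B₀ η.snd) := by
      rw [hD, ← pairL2_eta η]
      exact blockDiag_pairL2 _ _ _ _
    have h0 : pairL2 η.fst (B₀ η.snd) = 0 := by
      rw [← hblock.symm.trans hDη]
      simp
    rw [h0]
    exact pairL2_zero.symm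
  have hpair : ∀ x : A.domain,
      (inner ℂ η (pairL2 (τ₁ x) (τ₂ x)) : ℂ)
        = inner ℂ (z₂ • G z₂ η - A ⟨G z₂ η, hwmem⟩) (x : H) := by
    intro x
    have hxm : R (conj z₂) ((conj z₂) • (x : H) - A x) ∈ A.domain := by
      rw [hres₂c.2 x]; exact x.2
    have hxeq : (⟨R (conj z₂) ((conj z₂) • (x : H) - A x), hxm⟩ : A.domain) = x :=
      Subtype.ext (hres₂c.2 x)
    have h1 : (inner ℂ (G z₂ η) ((conj z₂) • (x : H) - A x) : ℂ)
        = inner ℂ η (pairL2 (τ₁ x) (τ₂ x)) := by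
      rw [hG z₂ hρ₂, ContinuousLinearMap.adjoint_inner_left,
        hT (conj z₂) hρ₂c _ hxm, hxeq]
    have h2 : (inner ℂ (G z₂ η) ((conj z₂) • (x : H) - A x) : ℂ)
        = inner ℂ (z₂ • G z₂ η - A ⟨G z₂ η, hwmem⟩) (x : H) := by
      rw [inner_sub_right, inner_smul_right, inner_sub_left, inner_smul_left,
        hsym ⟨G z₂ η, hwmem⟩ x]
    rw [← h1, h2]
  have hq0 : z₂ • G z₂ η - A ⟨G z₂ η, hwmem⟩ = 0 := by
    set q := z₂ • G z₂ η - A ⟨G z₂ η, hwmem⟩ with hqdef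
    have hvanish : Set.EqOn (fun u : H => (inner ℂ q u : ℂ)) (fun _ => 0)
        {u : H | ∃ hu : u ∈ A.domain, τ₂ ⟨u, hu⟩ = 0} := by
      rintro u ⟨hu, hτu⟩
      have hp := hpair ⟨u, hu⟩
      simp only
      rw [← hp, inner_pairL2, hτu, hcomp.1]
      simp
    have hext := Continuous.ext_on hker₂ (continuous_const.inner continuous_id)
      continuous_const hvanish
    have hqq : (inner ℂ q q : ℂ) = 0 := by
      have := congrFun hext q; simpa using this
    exact inner_self_eq_zero.mp hqq
  have hsnd : η.snd = 0 := by
    have hvanish : Set.EqOn (fun y : h2 => (inner ℂ η.snd y : ℂ)) (fun _ => 0)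
        (Set.range τ₂) := by
      rintro y ⟨x, rfl⟩
      have hp := hpair x
      rw [inner_pairL2, hcomp.1, hq0] at hp
      simp only [inner_zero_left, zero_add] at hp
      simpa using hp
    have hext := Continuous.ext_on hran₂ (continuous_const.inner continuous_id)
      continuous_const hvanish
    have hbb : (inner ℂ η.snd η.snd : ℂ) = 0 := by
      have := congrFun hext η.snd; simpa using this
    exact inner_self_eq_zero.mp hbb
  have hη0 : η = 0 := by
    rw [← pairL2_eta η, hcomp.1, hsnd]
    exact pairL2_zero
  rw [hη] at hη0
  exact sub_eq_zero.mp hη0
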